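/- For every prime p ≥ 3, the number 2 + 2√3 + 2p√12 + 2√(p^2-1) + 2√(3p^2-3) + 2√(12p^2-12p) is strictly less than 16p^2 + p + 5. (Hence B(Q_{4p}) is hypoenergetic for p ≥ 3.) -/
import Mathlib


theorem B_Q4p_hypoenergetic (p : ℕ) (hp : p.Prime) (hp3 : 3 ≤ p) :
    2 + 2 * Real.sqrt 3 + 2 * (p : ℝ) * Real.sqrt 12 + 2 * Real.sqrt ((p : ℝ) ^ 2 - 1)
      + 2 * Real.sqrt (3 * (p : ℝ) ^ 2 - 3) + 2 * Real.sqrt (12 * (p : ℝ) ^ 2 - 12 * (p : ℝ))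
      < 16 * (p : ℝ) ^ 2 + (p : ℝ) + 5 := by
  have hP : (3 : ℝ) ≤ (p : ℝ) := by exact_mod_cast hp3
  have h1 : Real.sqrt 3 < 2 := by
    rw [show (2:ℝ) = Real.sqrt 4 by rw [show (4:ℝ) = 2^2 by norm_num, Real.sqrt_sq]; norm_num]
    exact Real.sqrt_lt_sqrt (by norm_num) (by norm_num)
  have h2 : Real.sqrt 12 < 4 := (Real.sqrt_lt' (by norm_num)).mpr (by norm_num)
  have h3 : Real.sqrt ((p : ℝ) ^ 2 - 1) < p :=
    (Real.sqrt_lt' (by linarith)).mpr (by nlinarith)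
  have h4 : Real.sqrt (3 * (p : ℝ) ^ 2 - 3) < 2 * p :=
    (Real.sqrt_lt' (by linarith)).mpr (by nlinarith)
  have h5 : Real.sqrt (12 * (p : ℝ) ^ 2 - 12 * p) < 4 * p :=
    (Real.sqrt_lt' (by linarith)).mpr (by nlinarith)
  nlinarith [Real.sqrt_nonneg (3:ℝ), Real.sqrt_nonneg (12:ℝ)]
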